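/- There exists a constant K ≥ 0 (in fact K = 1 works for the regulator and K = 2 for the reflector) such that for any two continuous functions z₁, z₂ : [0,T] → ℝ with z₁(0), z₂(0) ≥ 0, defining yᵢ(t) = max_{s∈[0,t]}(zᵢ(s))⁻ and xᵢ = zᵢ + yᵢ, we have for each t ∈ [0,T]: sup_{s∈[0,t]} |y₁(s) − y₂(s)| ≤ K · sup_{s∈[0,t]} |z₁(s) − z₂(s)| and sup_{s∈[0,t]} |x₁(s) − x₂(s)| ≤ 2K · sup_{s∈[0,t]} |z₁(s) − z₂(s)|. -/

import Mathlib

open Set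

lemma bdd_range_icc (f : ℝ → ℝ) {a b : ℝ} (hf : ContinuousOn f (Icc a b)) :
    BddAbove (Set.range fun u : Icc a b => f u) := by
  rw [← Set.image_eq_range]
  exact (isCompact_Icc.image_of_continuousOn hf).bddAbove

/-- Lipschitz property of the Skorokhod map in the supremum norm: the regulator
with constant `K` and the reflector with constant `2K`. -/
theorem stmt2 (T : ℝ) (hT : 0 < T) :
    ∃ K : ℝ, 0 ≤ K ∧
      ∀ (z₁ z₂ y₁ y₂ x₁ x₂ : ℝ → ℝ),
        ContinuousOn z₁ (Icc 0 T) → ContinuousOn z₂ (Icc 0 T) →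
        0 ≤ z₁ 0 → 0 ≤ z₂ 0 →
        (∀ t ∈ Icc 0 T, y₁ t = ⨆ s : Icc 0 t, max (-(z₁ s)) 0) →
        (∀ t ∈ Icc 0 T, y₂ t = ⨆ s : Icc 0 t, max (-(z₂ s)) 0) →
        (∀ t ∈ Icc 0 T, x₁ t = z₁ t + y₁ t) →
        (∀ t ∈ Icc 0 T, x₂ t = z₂ t + y₂ t) →
        ∀ t ∈ Icc 0 T,
          (⨆ s : Icc 0 t, |y₁ s - y₂ s|) ≤ K * ⨆ s : Icc 0 t, |z₁ s - z₂ s| ∧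
          (⨆ s : Icc 0 t, |x₁ s - x₂ s|) ≤ 2 * K * ⨆ s : Icc 0 t, |z₁ s - z₂ s| := by
  refine ⟨1, zero_le_one, ?_⟩
  intro z₁ z₂ y₁ y₂ x₁ x₂ hz₁ hz₂ _ _ hy₁ hy₂ hx₁ hx₂ t ht
  obtain ⟨ht0, htT⟩ := ht
  set M : ℝ := ⨆ s : Icc 0 t, |z₁ s - z₂ s| with hM
  have hsub : Icc (0:ℝ) t ⊆ Icc 0 T := Icc_subset_Icc le_rfl htT
  have hbM : BddAbove (Set.range fun u : Icc (0:ℝ) t => |z₁ u - z₂ u|) :=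
    bdd_range_icc _ (((hz₁.mono hsub).sub (hz₂.mono hsub)).abs)
  have hzM : ∀ u ∈ Icc (0:ℝ) t, |z₁ u - z₂ u| ≤ M := fun u hu =>
    le_ciSup hbM (⟨u, hu⟩ : Icc (0:ℝ) t)
  -- key pointwise bound on |y₁ - y₂|
  have key : ∀ s ∈ Icc (0:ℝ) t, |y₁ s - y₂ s| ≤ M := by
    intro s hs
    obtain ⟨hs0, hst⟩ := hs
    have hsT : s ∈ Icc (0:ℝ) T := ⟨hs0, hst.trans htT⟩
    have hsubs : Icc (0:ℝ) s ⊆ Icc 0 t := Icc_subset_Icc le_rfl hst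
    have hne : Nonempty (Icc (0:ℝ) s) := ⟨⟨0, le_rfl, hs0⟩⟩
    have hb1 : BddAbove (Set.range fun u : Icc (0:ℝ) s => max (-(z₁ u)) 0) :=
      bdd_range_icc _ ((hz₁.mono (hsubs.trans hsub)).neg.sup continuousOn_const)
    have hb2 : BddAbove (Set.range fun u : Icc (0:ℝ) s => max (-(z₂ u)) 0) :=
      bdd_range_icc _ ((hz₂.mono (hsubs.trans hsub)).neg.sup continuousOn_const)
    have step : ∀ (a b : ℝ → ℝ) (ya yb : ℝ → ℝ)
        (hya : ya s = ⨆ u : Icc 0 s, max (-(a u)) 0)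
        (hyb : yb s = ⨆ u : Icc 0 s, max (-(b u)) 0)
        (hbb : BddAbove (Set.range fun u : Icc (0:ℝ) s => max (-(b u)) 0))
        (habM : ∀ u ∈ Icc (0:ℝ) t, |a u - b u| ≤ M),
        ya s - yb s ≤ M := by
      intro a b ya yb hya hyb hbb habM
      rw [hya, hyb, sub_le_iff_le_add]
      apply ciSup_le
      intro u
      have h1 : max (-(a u)) 0 - max (-(b u)) 0 ≤ |a u - b u| := by
        calc max (-(a u)) 0 - max (-(b u)) 0 ≤ |max (-(a u)) 0 - max (-(b u)) 0| :=
              le_abs_self _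
          _ ≤ |(-(a u)) - (-(b u))| := abs_max_sub_max_le_abs _ _ _
          _ = |a u - b u| := by rw [← abs_neg]; ring_nf
      have h2 : max (-(b u)) 0 ≤ ⨆ v : Icc (0:ℝ) s, max (-(b v)) 0 := le_ciSup hbb u
      have h3 : |a u - b u| ≤ M := habM u (hsubs u.2)
      linarith
    have hA := step z₁ z₂ y₁ y₂ (hy₁ s hsT) (hy₂ s hsT) hb2 hzM
    have hB := step z₂ z₁ y₂ y₁ (hy₂ s hsT) (hy₁ s hsT) hb1
      (fun u hu => by rw [abs_sub_comm]; exact hzM u hu)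
    exact abs_sub_le_iff.mpr ⟨hA, hB⟩
  have hnt : Nonempty (Icc (0:ℝ) t) := ⟨⟨0, le_rfl, ht0⟩⟩
  constructor
  · rw [one_mul]
    exact ciSup_le fun s => key s s.2
  · apply ciSup_le
    intro s
    have hsT : (s : ℝ) ∈ Icc (0:ℝ) T := hsub s.2
    rw [hx₁ s hsT, hx₂ s hsT]
    have h1 := hzM s s.2
    have h2 := key s s.2
    have : |z₁ s + y₁ s - (z₂ s + y₂ s)| ≤ |z₁ s - z₂ s| + |y₁ s - y₂ s| := by
      have := abs_add_le (z₁ s - z₂ s) (y₁ s - y₂ s)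
      convert this using 2
      · rfl
      · rfl
      ring
    linarith
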